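/- arXiv:math/9905078 — 3 statements merged into one kernel-verified Lean document; each statement's English description precedes it below -/
import Mathlib

section
/- Define I₂(p_x, p_y) = f(I₁(p)) · sin( (2π / log λ) · log |L₊(p)| ) for L₊(p) ≠ 0 and I₂ = 0 when I₁(p) = 0, where f(u) = exp(-1/u²), I₁(p) = p_x² - p_x p_y - p_y², L₊(p) = p_x - ((1+√5)/2)p_y, λ = (3+√5)/2. Then I₂ is invariant under the linear map B(p_x,p_y) = (p_x - p_y, -p_x + 2p_y): I₂(B p) = I₂(p) for all p ∈ ℝ². -/
/-- The function `I₂(p) = f(I₁(p)) · sin((2π/log λ)·log |L₊(p)|)` (set to `0`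
when `I₁(p) = 0`) is invariant under `B(p) = (p_x - p_y, -p_x + 2 p_y)`. -/
theorem stmt_7 :
    let lam : ℝ := (3 + Real.sqrt 5) / 2
    let f : ℝ → ℝ := fun u => Real.exp (-1 / u ^ 2)
    let I₁ : ℝ × ℝ → ℝ := fun p => p.1 ^ 2 - p.1 * p.2 - p.2 ^ 2
    let Lplus : ℝ × ℝ → ℝ := fun p => p.1 - ((1 + Real.sqrt 5) / 2) * p.2
    let B : ℝ × ℝ → ℝ × ℝ := fun p => (p.1 - p.2, -p.1 + 2 * p.2)
    let I₂ : ℝ × ℝ → ℝ := fun p =>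
      if I₁ p = 0 then 0
      else f (I₁ p) * Real.sin ((2 * Real.pi / Real.log lam) * Real.log |Lplus p|)
    ∀ p : ℝ × ℝ, I₂ (B p) = I₂ p := by
  intro lam f I₁ Lplus B I₂ p
  have h5 : Real.sqrt 5 ^ 2 = 5 := Real.sq_sqrt (by norm_num)
  have hs5 : (2:ℝ) < Real.sqrt 5 := by
    nlinarith [Real.sqrt_nonneg 5]
  have hlam1 : (1:ℝ) < lam := by
    simp only [lam]; nlinarith
  have hlampos : (0:ℝ) < lam := by linarith
  have hloglam : Real.log lam ≠ 0 := ne_of_gt (Real.log_pos hlam1)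
  have hI : I₁ (B p) = I₁ p := by
    simp only [I₁, B]; ring
  have hfac : I₁ p = Lplus p * (p.1 - ((1 - Real.sqrt 5) / 2) * p.2) := by
    simp only [I₁, Lplus]; nlinarith [h5]
  have hL : Lplus (B p) = lam * Lplus p := by
    simp only [Lplus, B, lam]; linear_combination ((p.2)/4) * h5
  simp only [I₂, hI]
  by_cases h0 : I₁ p = 0
  · simp [h0]
  · have hLp : Lplus p ≠ 0 := by
      intro h; exact h0 (by rw [hfac, h, zero_mul])
    simp only [h0, if_neg]
    congr 1
    rw [hL, abs_mul, abs_of_pos hlampos,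
      Real.log_mul (ne_of_gt hlampos) (abs_ne_zero.mpr hLp)]
    rw [mul_add]
    have : 2 * Real.pi / Real.log lam * Real.log lam = 2 * Real.pi := by
      field_simp
    rw [this, add_comm, Real.sin_add_two_pi]
end

section
/- In the group G = ℤ² ⋊_A ℤ with A = [[2,1],[1,1]], let a = ((1,0), 0) and c = ((0,0), 1). Then the 2^k words c a^{ε₁} c a^{ε₂} ⋯ c a^{ε_k} with ε_j ∈ {0,1} are pairwise distinct elements of G. -/
/-- The automorphism of `ℤ²` given by the matrix `A = [[2,1],[1,1]]`. -/
def anosovAut : (ℤ × ℤ) ≃+ (ℤ × ℤ) where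
  toFun v := (2 * v.1 + v.2, v.1 + v.2)
  invFun v := (v.1 - v.2, -v.1 + 2 * v.2)
  left_inv := by rintro ⟨x, y⟩; simp only [Prod.mk.injEq]; constructor <;> ring
  right_inv := by rintro ⟨x, y⟩; simp only [Prod.mk.injEq]; constructor <;> ring
  map_add' := by rintro ⟨x, y⟩ ⟨u, v⟩; simp only [Prod.mk_add_mk, Prod.mk.injEq]
                 constructor <;> ring

/-- The action of `ℤ` on `ℤ²` by powers of `A`. -/
noncomputable def anosovAction :
    Multiplicative ℤ →* MulAut (Multiplicative (ℤ × ℤ)) :=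
  zpowersHom _ (AddEquiv.toMultiplicative anosovAut)

/-- The group `G = ℤ² ⋊_A ℤ`. -/
noncomputable abbrev anosovGroup :=
  SemidirectProduct (Multiplicative (ℤ × ℤ)) (Multiplicative ℤ) anosovAction


namespace AnosovAux

def ι (e : Bool) : ℤ × ℤ := (if e then 1 else 0, 0)

def sv : List Bool → ℤ × ℤ
  | [] => 0
  | e :: t => anosovAut (ι e + sv t)

def w : ℕ → ℤ × ℤ
  | 0 => (1, 0)
  | j + 1 => anosovAut (w j)

lemma anosovAut_apply (v : ℤ × ℤ) : anosovAut v = (2 * v.1 + v.2, v.1 + v.2) := rfl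

lemma w_bounds (j : ℕ) : 1 ≤ (w j).1 ∧ 0 ≤ (w j).2 ∧ (w j).2 ≤ (w j).1 := by
  induction j with
  | zero => simp [w]
  | succ j ih =>
    obtain ⟨h1, h2, h3⟩ := ih
    simp only [w, anosovAut_apply]
    refine ⟨by omega, by omega, by omega⟩

def Sq : ℕ → ℤ
  | 0 => 0
  | k + 1 => Sq k + (w (k + 1)).2

lemma Sq_lt (k : ℕ) : Sq k < (w (k + 1)).2 := by
  induction k with
  | zero => simp [Sq, w, anosovAut_apply]
  | succ k ih =>
    have h := w_bounds (k + 1)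
    have hd : (w (k + 1 + 1)).2 = (w (k + 1)).1 + (w (k + 1)).2 := by
      simp [w, anosovAut_apply]
    simp only [Sq]
    omega

lemma sv_concat (δ : List Bool) (e : Bool) :
    sv (δ ++ [e]) = sv δ + (if e then w (δ.length + 1) else 0) := by
  induction δ with
  | nil => cases e <;> simp [sv, ι, w, anosovAut_apply]
  | cons d δ ih =>
    have h1 : sv ((d :: δ) ++ [e]) = anosovAut (ι d + sv (δ ++ [e])) := rfl
    have h2 : anosovAut (if e then w (δ.length + 1) else 0) =
        (if e then w (δ.length + 1 + 1) else 0) := by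
      cases e <;> simp [w]
    rw [h1, ih, ← add_assoc, map_add, h2]
    rfl

lemma sv_bound (δ : List Bool) : 0 ≤ (sv δ).2 ∧ (sv δ).2 ≤ Sq δ.length := by
  induction δ using List.reverseRecOn with
  | nil => simp [sv, Sq]
  | append_singleton δ e ih =>
    rw [sv_concat]
    have h := (w_bounds (δ.length + 1)).2.1
    simp only [Prod.snd_add, List.length_append, List.length_singleton, Sq]
    cases e <;> simp <;> omega

lemma sv_inj (ε ε' : List Bool) (hl : ε.length = ε'.length) (h : sv ε = sv ε') :
    ε = ε' := by
  induction ε using List.reverseRecOn generalizing ε' with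
  | nil =>
    cases ε' using List.reverseRecOn with
    | nil => rfl
    | append_singleton δ e => simp at hl
  | append_singleton δ e ih =>
    cases ε' using List.reverseRecOn with
    | nil => simp at hl
    | append_singleton δ' e' =>
      simp only [List.length_append, List.length_singleton] at hl
      have hδ : δ.length = δ'.length := by omega
      rw [sv_concat, sv_concat, hδ] at h
      have h2 : ((sv δ).2 + if e then (w (δ'.length + 1)).2 else 0)
          = ((sv δ').2 + if e' then (w (δ'.length + 1)).2 else 0) := by
        have := congrArg Prod.snd h
        simpa [apply_ite Prod.snd] using this
      have hee : e = e' := by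
        by_contra hne
        have hb := sv_bound δ
        have hb' := sv_bound δ'
        have hq := Sq_lt δ'.length
        rw [hδ] at hb
        cases e <;> cases e' <;> simp_all <;> omega
      subst hee
      have hsv : sv δ = sv δ' := add_right_cancel h
      rw [ih δ' hδ hsv]

lemma prod_eq (ε : List Bool) :
    (ε.map fun e => (⟨1, Multiplicative.ofAdd 1⟩ : anosovGroup) *
        (⟨Multiplicative.ofAdd ((1 : ℤ), (0 : ℤ)), 1⟩ : anosovGroup) ^ (if e then 1 else 0)).prod
      = ⟨Multiplicative.ofAdd (sv ε), Multiplicative.ofAdd (ε.length : ℤ)⟩ := by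
  induction ε with
  | nil => rfl
  | cons e t ih =>
    rw [List.map_cons, List.prod_cons, ih]
    refine SemidirectProduct.ext ?_ ?_ <;>
      cases e <;>
        simp only [Bool.false_eq_true, if_true, if_false, pow_zero, pow_one, mul_one,
          SemidirectProduct.mul_left, SemidirectProduct.mul_right] <;>
        simp [sv, ι, anosovAction, zpowersHom_apply, SemidirectProduct.mul_left,
          SemidirectProduct.mul_right, ← ofAdd_add, map_add] <;>
        ring_nf

end AnosovAux

open AnosovAux in
/-- In `G = ℤ² ⋊_A ℤ`, with `a = ((1,0),0)` and `c = ((0,0),1)`, the words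
`c a^{ε₁} c a^{ε₂} ⋯ c a^{ε_k}` with `ε_j ∈ {0,1}` are pairwise distinct. -/
theorem stmt_10 :
    let a : anosovGroup := ⟨Multiplicative.ofAdd (1, 0), 1⟩
    let c : anosovGroup := ⟨1, Multiplicative.ofAdd 1⟩
    ∀ ε ε' : List Bool, ε.length = ε'.length →
      (ε.map fun e => c * a ^ (if e then 1 else 0)).prod =
        (ε'.map fun e => c * a ^ (if e then 1 else 0)).prod →
      ε = ε' := by
  intro a c ε ε' hl h
  rw [prod_eq, prod_eq] at h
  exact sv_inj ε ε' hl (by simpa using congrArg SemidirectProduct.left h)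
end

section
/- The group G = ℤ² ⋊_A ℤ with A = [[2,1],[1,1]] is not virtually abelian: it contains no abelian subgroup of finite index. -/
/-- The underlying map of `A`. -/
def anosovF (v : ℤ × ℤ) : ℤ × ℤ := (2 * v.1 + v.2, v.1 + v.2)

lemma anosov_grow (l : ℤ) (hl : 0 < l) :
    ∀ k : ℕ, l ≤ (anosovF^[k] (l, 0)).1 ∧ 0 ≤ (anosovF^[k] (l, 0)).2 := by
  intro k
  induction k with
  | zero => simp
  | succ n ih =>
      rw [Function.iterate_succ_apply']
      obtain ⟨h1, h2⟩ := ih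
      constructor <;> simp only [anosovF] <;> omega

lemma anosov_no_fix (l : ℤ) (hl : 0 < l) (k : ℕ) (hk : 0 < k)
    (h : anosovF^[k] (l, 0) = (l, 0)) : False := by
  obtain ⟨m, rfl⟩ : ∃ m, k = m + 1 := ⟨k - 1, by omega⟩
  obtain ⟨h1, h2⟩ := anosov_grow l hl m
  rw [Function.iterate_succ_apply'] at h
  simp only [anosovF, Prod.mk.injEq] at h
  omega

lemma mulAut_pow_apply (k : ℕ) (v : ℤ × ℤ) :
    ((AddEquiv.toMultiplicative anosovAut) ^ k) (Multiplicative.ofAdd v)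
      = Multiplicative.ofAdd (anosovF^[k] v) := by
  induction k with
  | zero => simp
  | succ n ih =>
      rw [pow_succ', Function.iterate_succ_apply', MulAut.mul_apply, ih]
      rfl

/-- `G = ℤ² ⋊_A ℤ` is not virtually abelian: it contains no abelian subgroup
of finite index. -/
theorem stmt_12 :
    ¬ ∃ H : Subgroup anosovGroup, H.FiniteIndex ∧
        ∀ x ∈ H, ∀ y ∈ H, x * y = y * x := by
  rintro ⟨H, hfin, hab⟩
  set t : anosovGroup := SemidirectProduct.inr (Multiplicative.ofAdd (1 : ℤ))
  set a : anosovGroup :=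
    SemidirectProduct.inl (Multiplicative.ofAdd ((1, 0) : ℤ × ℤ))
  obtain ⟨k, hk, -, hkH⟩ :=
    Subgroup.exists_pow_mem_of_index_ne_zero hfin.index_ne_zero t
  obtain ⟨m, hm, -, hmH⟩ :=
    Subgroup.exists_pow_mem_of_index_ne_zero hfin.index_ne_zero a
  have hcomm := hab _ hkH _ hmH
  have ha : a ^ m = SemidirectProduct.inl
      (Multiplicative.ofAdd (((m : ℤ), 0) : ℤ × ℤ)) := by
    rw [← map_pow]
    congr 1
    rw [← ofAdd_nsmul]
    congr 1
    simp [Prod.smul_mk]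
  have ht : t ^ k = SemidirectProduct.inr (Multiplicative.ofAdd ((k : ℤ))) := by
    rw [← map_pow]
    congr 1
    rw [← ofAdd_nsmul]
    congr 1
    simp
  rw [ha, ht] at hcomm
  have hleft := congrArg SemidirectProduct.left hcomm
  simp only [SemidirectProduct.mul_left, SemidirectProduct.left_inl,
    SemidirectProduct.left_inr, SemidirectProduct.right_inl,
    SemidirectProduct.right_inr, one_mul, mul_one, map_one] at hleft
  have hact : anosovAction (Multiplicative.ofAdd ((k : ℤ)))
      = (AddEquiv.toMultiplicative anosovAut) ^ k := by
    show (AddEquiv.toMultiplicative anosovAut) ^ ((k : ℤ)) = _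
    rw [zpow_natCast]
  rw [hact, mulAut_pow_apply] at hleft
  have : anosovF^[k] (((m : ℤ), 0)) = (((m : ℤ), 0)) :=
    Multiplicative.ofAdd.injective hleft
  exact anosov_no_fix _ (by exact_mod_cast hm) k hk this
end
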